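/- arXiv:2604.05607 — 6 statements merged into one kernel-verified Lean document; each statement's English description precedes it below -/
import Mathlib

section
/- For every integer s ≥ 2 and every integer n ≥ 1, α_s(H_2(n)) ≤ (s − 1) · 2^n / n (an inequality of real numbers). -/
open Finset

/-- The `r`-distance graph on the Boolean cube `{0,1}^n`: two vertices are adjacent
iff their Hamming distance equals `r`. -/
def cubeGraph (n r : ℕ) : SimpleGraph (Fin n → Bool) where
  Adj x y := x ≠ y ∧ hammingDist x y = r
  symm := by
    constructor
    rintro x y ⟨hne, hd⟩
    exact ⟨hne.symm, by rwa [hammingDist_comm]⟩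
  loopless := by constructor; rintro x ⟨hne, -⟩; exact hne rfl

/-- `S` is `K_s`-free in `G`: it contains no `s` pairwise adjacent vertices. -/
def IsKFree {V : Type*} (G : SimpleGraph V) (s : ℕ) (S : Finset V) : Prop :=
  ¬ ∃ T : Finset V, T ⊆ S ∧ T.card = s ∧ ∀ x ∈ T, ∀ y ∈ T, x ≠ y → G.Adj x y

/-- The `s`-independence number: the maximum size of a `K_s`-free vertex subset. -/
noncomputable def alphaS {V : Type*} [Fintype V] (G : SimpleGraph V) (s : ℕ) : ℕ :=
  sSup {m | ∃ S : Finset V, IsKFree G s S ∧ S.card = m}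

/-- The Hamming weight (number of `true` coordinates) of a vertex of the cube. -/
def wt {n : ℕ} (x : Fin n → Bool) : ℕ := (univ.filter fun i => x i = true).card

/-- The subgraph of `cubeGraph n r` induced on the `k`-th layer. -/
def layerGraph (n r k : ℕ) : SimpleGraph {x : Fin n → Bool // wt x = k} :=
  SimpleGraph.induce {x : Fin n → Bool | wt x = k} (cubeGraph n r)


lemma distTwo {n : ℕ} {x y z : Fin n → Bool} (hy : hammingDist x y = 1)
    (hz : hammingDist x z = 1) (hne : y ≠ z) : hammingDist y z = 2 := by
  obtain ⟨i, hi⟩ := Finset.card_eq_one.mp hy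
  obtain ⟨j, hj⟩ := Finset.card_eq_one.mp hz
  have hy' : ∀ k, x k ≠ y k ↔ k = i := by
    intro k
    rw [show (k = i) ↔ k ∈ ({i} : Finset (Fin n)) by simp, ← hi]
    simp [hammingDist]
  have hz' : ∀ k, x k ≠ z k ↔ k = j := by
    intro k
    rw [show (k = j) ↔ k ∈ ({j} : Finset (Fin n)) by simp, ← hj]
    simp [hammingDist]
  have hij : i ≠ j := by
    rintro rfl
    apply hne
    funext k
    by_cases hk : k = i
    · subst hk
      have h1 := (hy' k).mpr rfl
      have h2 := (hz' k).mpr rfl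
      revert h1 h2; cases y k <;> cases z k <;> cases x k <;> simp
    · have h1 : x k = y k := not_ne_iff.mp (fun h => hk ((hy' k).mp h))
      have h2 : x k = z k := not_ne_iff.mp (fun h => hk ((hz' k).mp h))
      rw [← h1, ← h2]
  have key : ∀ k, y k ≠ z k ↔ (k = i ∨ k = j) := by
    intro k
    constructor
    · intro h
      by_contra hc
      push_neg at hc
      have h1 : x k = y k := not_ne_iff.mp (fun hh => hc.1 ((hy' k).mp hh))
      have h2 : x k = z k := not_ne_iff.mp (fun hh => hc.2 ((hz' k).mp hh))
      exact h (h1 ▸ h2)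
    · rintro (rfl | rfl)
      · have h1 := (hy' k).mpr rfl
        have h2 : x k = z k := not_ne_iff.mp (fun hh => hij ((hz' k).mp hh))
        exact fun e => h1 (h2.trans e.symm)
      · have h1 := (hz' k).mpr rfl
        have h2 : x k = y k := not_ne_iff.mp (fun hh => hij ((hy' k).mp hh).symm)
        exact fun e => h1 (h2.trans e)
  show #{k | y k ≠ z k} = 2
  have : ({k | y k ≠ z k} : Finset (Fin n)) = {i, j} := by
    ext k; simp [key k]
  rw [this, Finset.card_insert_of_notMem (by simp [hij]), Finset.card_singleton]

lemma sphereCard {n : ℕ} (y : Fin n → Bool) :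
    #{x : Fin n → Bool | hammingDist y x = 1} = n := by
  have himg : ({x : Fin n → Bool | hammingDist y x = 1} : Finset _)
      = (univ : Finset (Fin n)).image (fun i => Function.update y i (!(y i))) := by
    ext x
    simp only [mem_filter, mem_univ, true_and, mem_image]
    constructor
    · intro h
      obtain ⟨i, hi⟩ := Finset.card_eq_one.mp h
      have hy' : ∀ k, y k ≠ x k ↔ k = i := by
        intro k
        rw [show (k = i) ↔ k ∈ ({i} : Finset (Fin n)) by simp, ← hi]
        simp [hammingDist]
      refine ⟨i, ?_⟩
      funext k
      by_cases hk : k = i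
      · subst hk
        have := (hy' k).mpr rfl
        rw [Function.update_self]
        cases hyk : y k <;> cases hxk : x k <;> simp_all
      · have h2 : y k = x k := not_ne_iff.mp (fun hh => hk ((hy' k).mp hh))
        rw [Function.update_of_ne hk]; exact h2
    · rintro ⟨i, rfl⟩
      show #{k | y k ≠ Function.update y i (!(y i)) k} = 1
      have : ({k | y k ≠ Function.update y i (!(y i)) k} : Finset (Fin n)) = {i} := by
        ext k
        by_cases hk : k = i
        · subst hk; simp
        · simp [hk, Function.update_of_ne hk]
      rw [this, Finset.card_singleton]
  rw [himg, Finset.card_image_of_injective _ ?_, card_univ, Fintype.card_fin]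
  intro i j hij
  by_contra hne
  have := congrFun hij i
  simp only [Function.update_self, Function.update_of_ne hne] at this
  exact (Bool.not_ne_self (y i)) this

/-- **Theorem.** For every `s ≥ 2` and `n ≥ 1`,
`α_s(H_2(n)) ≤ (s − 1) · 2^n / n`. -/
theorem stmt2 (s n : ℕ) (hs : 2 ≤ s) (hn : 1 ≤ n) :
    (alphaS (cubeGraph n 2) s : ℝ) ≤ ((s : ℝ) - 1) * 2 ^ n / n := by
  have hmem : alphaS (cubeGraph n 2) s ∈
      {m | ∃ S : Finset (Fin n → Bool), IsKFree (cubeGraph n 2) s S ∧ S.card = m} := by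
    apply Nat.sSup_mem
    · refine ⟨0, ∅, ?_, rfl⟩
      rintro ⟨T, hT, hc, -⟩
      rw [Finset.subset_empty.mp hT] at hc
      simp at hc; omega
    · refine ⟨Fintype.card (Fin n → Bool), ?_⟩
      rintro m ⟨S, -, rfl⟩
      exact S.card_le_univ.trans_eq Finset.card_univ
  obtain ⟨S, hfree, hcard⟩ := hmem
  have hclique : ∀ x : Fin n → Bool,
      (S.filter fun y => hammingDist x y = 1).card ≤ s - 1 := by
    intro x
    by_contra h
    push_neg at h
    have hs' : s ≤ (S.filter fun y => hammingDist x y = 1).card := by omega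
    obtain ⟨T, hTsub, hTcard⟩ := Finset.exists_subset_card_eq hs'
    apply hfree
    refine ⟨T, fun t ht => (Finset.mem_filter.mp (hTsub ht)).1, hTcard, ?_⟩
    intro a ha b hb hab
    have h1 := (Finset.mem_filter.mp (hTsub ha)).2
    have h2 := (Finset.mem_filter.mp (hTsub hb)).2
    exact ⟨hab, distTwo h1 h2 hab⟩
  have hcount : n * S.card ≤ (s - 1) * 2 ^ n := by
    have h1 : ∑ x : Fin n → Bool, (S.filter fun y => hammingDist x y = 1).card
        = n * S.card := by
      calc ∑ x : Fin n → Bool, (S.filter fun y => hammingDist x y = 1).card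
          = ∑ x : Fin n → Bool, ∑ y ∈ S, if hammingDist x y = 1 then 1 else 0 := by
            exact Finset.sum_congr rfl fun x _ => Finset.card_filter _ _
        _ = ∑ y ∈ S, ∑ x : Fin n → Bool, if hammingDist x y = 1 then 1 else 0 :=
            Finset.sum_comm
        _ = ∑ y ∈ S, #{x : Fin n → Bool | hammingDist y x = 1} := by
            refine Finset.sum_congr rfl fun y _ => ?_
            rw [Finset.card_filter]
            exact Finset.sum_congr rfl fun x _ => by rw [hammingDist_comm]
        _ = ∑ _y ∈ S, n := by
            exact Finset.sum_congr rfl fun y _ => sphereCard y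
        _ = n * S.card := by rw [Finset.sum_const, smul_eq_mul, mul_comm]
    rw [← h1]
    calc ∑ x : Fin n → Bool, (S.filter fun y => hammingDist x y = 1).card
        ≤ ∑ _x : Fin n → Bool, (s - 1) := Finset.sum_le_sum fun x _ => hclique x
      _ = (s - 1) * 2 ^ n := by
          rw [Finset.sum_const, smul_eq_mul, Finset.card_univ, mul_comm]
          congr 1
          rw [Fintype.card_fun, Fintype.card_bool, Fintype.card_fin]
  rw [hcard] at hcount
  rw [le_div_iff₀ (by positivity : (0 : ℝ) < (n : ℝ))]
  have hc : ((n * alphaS (cubeGraph n 2) s : ℕ) : ℝ) ≤ (((s - 1) * 2 ^ n : ℕ) : ℝ) :=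
    Nat.cast_le.mpr hcount
  push_cast [Nat.cast_sub (by omega : 1 ≤ s)] at hc
  linarith
end

section
/- Fix integers s ≥ 2, t ≥ 1 and k ≥ 1. For every real ε > 0 there exists M such that for every m ≥ M, setting n = 2^m − k (which is ≥ 1 for m large), one has α_s(H_{2t}(n)) ≥ (s − 1 − ε) · 2^n / n^t. -/
open Finset

lemma powersum_vanish {F : Type*} [Field F] [CharP F 2] (t : ℕ) (ht : 1 ≤ t)
    (β : Fin (2*t) → F) (hβinj : Function.Injective β) (hβ0 : ∀ i, β i ≠ 0)
    (hp : ∀ j : Fin t, ∑ i, β i ^ (2*(j:ℕ)+1) = 0) : False := by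
  classical
  have key : ∀ j, 1 ≤ j → j ≤ 2*t → ∑ i, β i ^ j = 0 := by
    intro j
    induction j using Nat.strong_induction_on with
    | _ j ih =>
      intro h1 h2
      rcases Nat.even_or_odd j with ⟨j', hj'⟩ | ⟨j', hj'⟩
      · have hj1 : 1 ≤ j' := by omega
        have he : ∑ i, β i ^ j = (∑ i, β i ^ j') ^ 2 := by
          rw [CharTwo.sum_sq]
          refine Finset.sum_congr rfl fun i _ => ?_
          rw [← pow_mul]
          congr 1; omega
        rw [he, ih j' (by omega) hj1 (by omega)]
        exact zero_pow (by norm_num)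
      · have hj't : j' < t := by omega
        have := hp ⟨j', hj't⟩
        simpa [show 2*j'+1 = j by omega] using this
  set M : Matrix (Fin (2*t)) (Fin (2*t)) F := fun i j => β i ^ ((j:ℕ)+1) with hM
  have hMeq : M = Matrix.diagonal β * Matrix.vandermonde β := by
    ext i j
    rw [Matrix.diagonal_mul]
    simp [hM, Matrix.vandermonde, pow_succ']
  have hdet : M.det ≠ 0 := by
    rw [hMeq, Matrix.det_mul, Matrix.det_diagonal, Matrix.det_vandermonde]
    refine mul_ne_zero (Finset.prod_ne_zero_iff.2 fun i _ => hβ0 i) ?_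
    refine Finset.prod_ne_zero_iff.2 fun i _ => Finset.prod_ne_zero_iff.2 fun j hj => ?_
    exact sub_ne_zero.2 fun h => absurd (hβinj h) (Finset.mem_Ioi.1 hj).ne'
  have hvm : Matrix.vecMul (fun _ => (1:F)) M = 0 := by
    funext j
    have : ∑ i, β i ^ ((j:ℕ)+1) = 0 := key _ (by omega) (by omega)
    simpa [Matrix.vecMul, dotProduct, hM] using this
  have h1 : (fun _ => (1:F)) = (0 : Fin (2*t) → F) := by
    have h2 := Matrix.vecMul_vecMul (fun _ => (1:F)) M M⁻¹
    rw [hvm, Matrix.zero_vecMul, Matrix.mul_nonsing_inv M (isUnit_iff_ne_zero.2 hdet),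
      Matrix.vecMul_one] at h2
    exact h2.symm
  have := congrFun h1 ⟨0, by omega⟩
  simp at this

lemma le_alphaS {V : Type*} [Fintype V] (G : SimpleGraph V) (s : ℕ) (S : Finset V)
    (h : IsKFree G s S) : S.card ≤ alphaS G s := by
  apply le_csSup
  · exact ⟨Fintype.card V, by rintro x ⟨S, -, rfl⟩; exact S.card_le_univ⟩
  · exact ⟨S, h, rfl⟩

lemma main_construction (s t n m : ℕ) (hs : 2 ≤ s) (ht : 1 ≤ t)
    (hsn : s - 1 ≤ n) (hn1 : 1 ≤ n) (hnm : n + 1 ≤ 2 ^ m) (hm : 1 ≤ m) :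
    ∃ D : ℕ, 2 ^ n ≤ (2 ^ m) ^ t * D ∧ (s - 1) * D ≤ alphaS (cubeGraph n (2*t)) s := by
  classical
  set F := GaloisField 2 m with hF
  haveI : Fintype F := Fintype.ofFinite F
  have hcard : Fintype.card F = 2 ^ m := by
    rw [← Nat.card_eq_fintype_card]; exact GaloisField.card 2 m (by omega)
  have hcardu : Fintype.card (Fin n) ≤ Fintype.card Fˣ := by
    rw [Fintype.card_units, hcard, Fintype.card_fin]; omega
  obtain ⟨emb⟩ := Function.Embedding.nonempty_of_card_le hcardu
  set α : Fin n → F := fun i => ((emb i : Fˣ) : F) with hα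
  have hαinj : Function.Injective α := fun a b h => emb.injective (Units.ext h)
  have hα0 : ∀ i, α i ≠ 0 := fun i => Units.ne_zero _
  set σ : (Fin n → Bool) → (Fin t → F) :=
    fun x j => ∑ i ∈ univ.filter (fun i => x i = true), α i ^ (2*(j:ℕ)+1) with hσ
  set xv : (Fin n → Bool) → (Fin n → Bool) → (Fin n → Bool) :=
    fun x y i => xor (x i) (y i) with hxv
  have hσadd : ∀ x y, σ (xv x y) = fun j => σ x j + σ y j := by
    intro x y; funext j
    simp only [hσ, hxv]
    rw [Finset.sum_filter, Finset.sum_filter, Finset.sum_filter, ← Finset.sum_add_distrib]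
    refine Finset.sum_congr rfl fun i _ => ?_
    rcases Bool.dichotomy (x i) with hx | hx <;> rcases Bool.dichotomy (y i) with hy | hy <;>
      simp only [hx, hy] <;> simp [CharTwo.add_self_eq_zero]
  have hmind : ∀ x y : Fin n → Bool, σ x = σ y → hammingDist x y ≠ 2*t := by
    intro x y hσxy hdist
    set S := univ.filter (fun i => (xv x y) i = true) with hS
    have hScard : S.card = 2*t := by
      rw [← hdist]
      unfold hammingDist
      congr 1
      ext i
      simp only [hS, hxv, Finset.mem_filter, Finset.mem_univ, true_and]
      rcases Bool.dichotomy (x i) with hx | hx <;> rcases Bool.dichotomy (y i) with hy | hy <;>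
        rw [hx, hy] <;> simp
    have hσd : ∀ j : Fin t, ∑ i ∈ S, α i ^ (2*(j:ℕ)+1) = 0 := by
      intro j
      have h0 : σ (xv x y) j = 0 := by
        rw [congrFun (hσadd x y) j, hσxy]
        exact CharTwo.add_self_eq_zero _
      simpa [hσ, hS] using h0
    set e := S.orderIsoOfFin hScard with he
    apply powersum_vanish (F := F) t ht (fun i => α ((e i : Fin n)))
    · intro a b h
      exact e.injective (Subtype.ext (hαinj h))
    · intro i; exact hα0 _
    · intro j
      rw [← hσd j, ← Finset.sum_attach S (fun i => α i ^ (2*(j:ℕ)+1))]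
      exact Equiv.sum_comp e.toEquiv (fun a : S => α (a : Fin n) ^ (2*(j:ℕ)+1))
  -- fibers
  set fib : (Fin t → F) → Finset (Fin n → Bool) :=
    fun c => univ.filter (fun x => σ x = c) with hfib
  have hVcard : Fintype.card (Fin n → Bool) = 2^n := by simp
  have hsum : ∑ c : Fin t → F, (fib c).card = 2^n := by
    rw [← hVcard, ← Finset.card_univ]
    exact (Finset.card_eq_sum_card_fiberwise (fun x _ => Finset.mem_univ (σ x))).symm
  have hFne : Nonempty (Fin t → F) := ⟨fun _ => 0⟩
  obtain ⟨c0, -, hc0⟩ := Finset.exists_max_image (univ : Finset (Fin t → F))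
    (fun c => (fib c).card) ⟨hFne.some, Finset.mem_univ _⟩
  refine ⟨(fib c0).card, ?_, ?_⟩
  · calc 2^n = ∑ c : Fin t → F, (fib c).card := hsum.symm
    _ ≤ ∑ _c : Fin t → F, (fib c0).card :=
        Finset.sum_le_sum (fun c _ => hc0 c (Finset.mem_univ c))
    _ = (2^m)^t * (fib c0).card := by
        rw [Finset.sum_const, Finset.card_univ, smul_eq_mul]
        congr 2
        simp [hcard]
  · obtain ⟨J, -, hJcard⟩ := Finset.exists_subset_card_eq (s := (univ : Finset (Fin n))) (n := s-1)
      (by simpa using hsn)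
    set ind : Fin n → (Fin n → Bool) := fun a i => decide (i = a) with hind
    set tr : Fin n → Finset (Fin n → Bool) :=
      fun a => (fib c0).image (fun x => xv x (ind a)) with htr
    have hxvinj : ∀ v, Function.Injective (fun x => xv x v) := by
      intro v x y h
      funext i
      have hb : ∀ a b c : Bool, (a ^^ c) = (b ^^ c) → a = b := by decide
      exact hb _ _ _ (congrFun h i)
    have htrcard : ∀ a, (tr a).card = (fib c0).card := by
      intro a
      exact Finset.card_image_of_injective _ (hxvinj (ind a))
    have hσtr : ∀ a, ∀ z ∈ tr a, σ z = fun j => c0 j + σ (ind a) j := by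
      intro a z hz
      simp only [htr, Finset.mem_image] at hz
      obtain ⟨x, hx, rfl⟩ := hz
      simp only [hfib, Finset.mem_filter] at hx
      rw [hσadd, hx.2]
    set j0 : Fin t := ⟨0, ht⟩ with hj0
    have hσind : ∀ a, σ (ind a) j0 = α a := by
      intro a
      have : (univ.filter (fun i => ind a i = true)) = {a} := by
        ext i; simp [hind]
      simp only [hσ, this, Finset.sum_singleton]
      norm_num
    have hdisj : ∀ a ∈ J, ∀ b ∈ J, a ≠ b → Disjoint (tr a) (tr b) := by
      intro a _ b _ hab
      rw [Finset.disjoint_left]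
      intro z hza hzb
      have h1 := congrFun (hσtr a z hza) j0
      have h2 := congrFun (hσtr b z hzb) j0
      rw [h1] at h2
      have : σ (ind a) j0 = σ (ind b) j0 := by
        exact add_left_cancel h2
      rw [hσind, hσind] at this
      exact hab (hαinj this)
    have hUcard : (J.biUnion tr).card = (s-1) * (fib c0).card := by
      rw [Finset.card_biUnion hdisj]
      rw [Finset.sum_congr rfl (fun a _ => htrcard a), Finset.sum_const, hJcard, smul_eq_mul]
    have hfree : IsKFree (cubeGraph n (2*t)) s (J.biUnion tr) := by
      rintro ⟨T, hTU, hTcard, hTadj⟩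
      have hmap : ∀ z ∈ T, ∃ a ∈ J, z ∈ tr a := by
        intro z hz
        exact Finset.mem_biUnion.1 (hTU hz)
      have hne : Nonempty (Fin n) := ⟨⟨0, hn1⟩⟩
      set f : (Fin n → Bool) → Fin n := fun z =>
        if h : ∃ a ∈ J, z ∈ tr a then h.choose else hne.some with hf
      have hfmem : ∀ z ∈ T, f z ∈ J := by
        intro z hz
        have h := hmap z hz
        simp only [hf, dif_pos h]
        exact h.choose_spec.1
      have hftr : ∀ z ∈ T, z ∈ tr (f z) := by
        intro z hz
        have h := hmap z hz
        simp only [hf, dif_pos h]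
        exact h.choose_spec.2
      obtain ⟨z, hz, w, hw, hzw, hfzw⟩ :=
        Finset.exists_ne_map_eq_of_card_lt_of_maps_to
          (by rw [hTcard, hJcard]; omega) hfmem
      have hadj := hTadj z hz w hw hzw
      have hσz := hσtr (f z) z (hftr z hz)
      have hσw := hσtr (f w) w (hftr w hw)
      rw [hfzw] at hσz
      exact hmind z w (hσz.trans hσw.symm) hadj.2
    calc (s-1) * (fib c0).card = (J.biUnion tr).card := hUcard.symm
    _ ≤ alphaS (cubeGraph n (2*t)) s := le_alphaS _ _ _ hfree

/-- **Theorem.** For fixed `s ≥ 2`, `t ≥ 1`, `k ≥ 1` and every `ε > 0`, for all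
sufficiently large `m`, setting `n = 2^m − k`,
`α_s(H_{2t}(n)) ≥ (s − 1 − ε) · 2^n / n^t`. -/
theorem stmt4 (s t k : ℕ) (hs : 2 ≤ s) (ht : 1 ≤ t) (hk : 1 ≤ k) :
    ∀ ε : ℝ, 0 < ε → ∃ M : ℕ, ∀ m : ℕ, M ≤ m →
      ((s : ℝ) - 1 - ε) * 2 ^ (2 ^ m - k) / ((2 ^ m - k : ℕ) : ℝ) ^ t ≤
        (alphaS (cubeGraph (2 ^ m - k) (2 * t)) s : ℝ) := by
  intro ε hε
  obtain ⟨M2, hM2⟩ := pow_unbounded_of_one_lt (x := ((s:ℝ)-1)*t*k/ε) one_lt_two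
  refine ⟨max (max (s+k) M2) 1, fun m hm => ?_⟩
  have hm1 : 1 ≤ m := le_trans (le_max_right _ _) hm
  have hsk : s + k ≤ 2^m :=
    le_trans (Nat.lt_two_pow_self).le
      (Nat.pow_le_pow_right (by norm_num)
        (le_trans (le_trans (le_max_left _ _) (le_max_left _ _)) hm))
  have hM2m : ((s:ℝ)-1)*t*k/ε < 2^m :=
    lt_of_lt_of_le hM2 (pow_le_pow_right₀ one_le_two
      (le_trans (le_trans (le_max_right _ _) (le_max_left _ _)) hm))
  set n := 2^m - k with hn
  have hk2 : k ≤ 2^m := by omega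
  have hn1 : 1 ≤ n := by omega
  have hsn : s - 1 ≤ n := by omega
  have hnm : n + 1 ≤ 2^m := by omega
  obtain ⟨D, hD1, hD2⟩ := main_construction s t n m hs ht hsn hn1 hnm hm1
  have hs1 : (0:ℝ) ≤ (s:ℝ) - 1 := by
    have : (1:ℝ) ≤ s := by exact_mod_cast (by omega : 1 ≤ s)
    linarith
  have hD0 : (0:ℝ) ≤ (D:ℝ) := Nat.cast_nonneg D
  have hcast1 : (((s-1)*D : ℕ) : ℝ) = ((s:ℝ)-1) * D := by
    rw [Nat.cast_mul, Nat.cast_sub (by omega : 1 ≤ s)]; norm_num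
  have halpha : ((s:ℝ)-1) * D ≤ (alphaS (cubeGraph n (2*t)) s : ℝ) := by
    rw [← hcast1]; exact_mod_cast hD2
  have hD1R : (2:ℝ)^n ≤ ((2:ℝ)^m)^t * D := by exact_mod_cast hD1
  have hnR : ((n:ℕ):ℝ) = (2:ℝ)^m - (k:ℝ) := by
    rw [hn, Nat.cast_sub hk2]; push_cast; ring
  have hn0 : (0:ℝ) < ((n:ℕ):ℝ) := by exact_mod_cast hn1
  have hA : (0:ℝ) < 2^m := by positivity
  have hKA : (k:ℝ) ≤ (2:ℝ)^m := by exact_mod_cast hk2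
  have hK0 : (0:ℝ) ≤ (k:ℝ) := Nat.cast_nonneg k
  refine le_trans ?_ halpha
  rw [div_le_iff₀ (by positivity)]
  -- goal : ((s:ℝ)-1-ε) * 2^n ≤ ((s:ℝ)-1)*D * (↑n)^t
  rcases le_or_gt ((s:ℝ)-1-ε) 0 with hc | hc
  · have h1 : ((s:ℝ)-1-ε) * 2^n ≤ 0 :=
      mul_nonpos_of_nonpos_of_nonneg hc (by positivity)
    have h2 : (0:ℝ) ≤ ((s:ℝ)-1)*D * (↑n)^t := by positivity
    linarith
  · -- key inequality
    have hεA : ((s:ℝ)-1)*t*k ≤ ε*(2:ℝ)^m := by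
      rw [div_lt_iff₀ hε] at hM2m
      linarith
    have hb : 1 - (t:ℝ)*((k:ℝ)/(2:ℝ)^m) ≤ (1 - (k:ℝ)/(2:ℝ)^m)^t := by
      have h2 : (-2:ℝ) ≤ -((k:ℝ)/(2:ℝ)^m) := by
        have h3 : (k:ℝ)/(2:ℝ)^m ≤ 1 := (div_le_one hA).2 hKA
        linarith
      have := one_add_mul_le_pow h2 t
      calc 1 - (t:ℝ)*((k:ℝ)/(2:ℝ)^m) = 1 + (t:ℝ)*(-((k:ℝ)/(2:ℝ)^m)) := by ring
      _ ≤ (1 + -((k:ℝ)/(2:ℝ)^m))^t := this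
      _ = (1 - (k:ℝ)/(2:ℝ)^m)^t := by ring_nf
    have hptA : ((n:ℕ):ℝ)^t = (1 - (k:ℝ)/(2:ℝ)^m)^t * ((2:ℝ)^m)^t := by
      rw [← mul_pow, hnR]
      congr 1
      field_simp
    have hAt : (0:ℝ) < ((2:ℝ)^m)^t := by positivity
    have key : ((s:ℝ)-1-ε) * ((2:ℝ)^m)^t ≤ ((s:ℝ)-1) * ((n:ℕ):ℝ)^t := by
      have h1 : ((s:ℝ)-1)*((t:ℝ)*((k:ℝ)/(2:ℝ)^m)) ≤ ε := by
        rw [show ((s:ℝ)-1)*((t:ℝ)*((k:ℝ)/(2:ℝ)^m)) = ((s:ℝ)-1)*t*k/(2:ℝ)^m by ring,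
          div_le_iff₀ hA]
        linarith
      calc ((s:ℝ)-1-ε) * ((2:ℝ)^m)^t
          ≤ (((s:ℝ)-1) * (1 - (t:ℝ)*((k:ℝ)/(2:ℝ)^m))) * ((2:ℝ)^m)^t := by
            apply mul_le_mul_of_nonneg_right _ hAt.le
            linarith [h1, mul_le_mul_of_nonneg_left h1 hs1]
        _ ≤ (((s:ℝ)-1) * (1 - (k:ℝ)/(2:ℝ)^m)^t) * ((2:ℝ)^m)^t := by
            apply mul_le_mul_of_nonneg_right _ hAt.le
            exact mul_le_mul_of_nonneg_left hb hs1
        _ = ((s:ℝ)-1) * ((n:ℕ):ℝ)^t := by rw [hptA]; ring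
    calc ((s:ℝ)-1-ε) * 2^n ≤ ((s:ℝ)-1-ε) * (((2:ℝ)^m)^t * D) :=
          mul_le_mul_of_nonneg_left hD1R hc.le
      _ = (((s:ℝ)-1-ε) * ((2:ℝ)^m)^t) * D := by ring
      _ ≤ (((s:ℝ)-1) * ((n:ℕ):ℝ)^t) * D := mul_le_mul_of_nonneg_right key hD0
      _ = ((s:ℝ)-1)*D * ((n:ℕ):ℝ)^t := by ring
end

section
/- Transfer lemma: for all integers n ≥ 1, t ≥ 1, s ≥ 2 and every k with 0 ≤ k ≤ n, one has binom(n,k) · α_s(H_{2t}(n)) ≤ 2^n · α_s(L_k), where L_k is the subgraph of H_{2t}(n) induced on the k-th layer. -/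
open Finset

/-! ### Auxiliary material -/

def tXor {n : ℕ} (z x : Fin n → Bool) : Fin n → Bool := fun i => xor (z i) (x i)

lemma tXor_invol {n : ℕ} (z x : Fin n → Bool) : tXor z (tXor z x) = x := by
  funext i; simp only [tXor]; cases z i <;> cases x i <;> rfl

lemma tXor_inj {n : ℕ} (z : Fin n → Bool) : Function.Injective (tXor z) :=
  Function.LeftInverse.injective (tXor_invol z)

lemma hammingDist_tXor {n : ℕ} (z x y : Fin n → Bool) :
    hammingDist (tXor z x) (tXor z y) = hammingDist x y := by
  simp only [hammingDist]
  congr 1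
  apply Finset.filter_congr
  intro i _
  simp only [tXor]
  cases z i <;> cases x i <;> cases y i <;> simp

lemma adj_tXor {n r : ℕ} (z x y : Fin n → Bool) :
    (cubeGraph n r).Adj (tXor z x) (tXor z y) ↔ (cubeGraph n r).Adj x y := by
  show (tXor z x ≠ tXor z y ∧ _) ↔ (x ≠ y ∧ _)
  rw [hammingDist_tXor, (tXor_inj z).ne_iff]

lemma exists_alphaS_max {V : Type*} [Fintype V] (G : SimpleGraph V) (s : ℕ) (hs : 1 ≤ s) :
    ∃ S : Finset V, IsKFree G s S ∧ S.card = alphaS G s := by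
  have hne : ({m | ∃ S : Finset V, IsKFree G s S ∧ S.card = m}).Nonempty := by
    refine ⟨0, ∅, ?_, card_empty⟩
    rintro ⟨T, hT, hc, -⟩
    rw [Finset.subset_empty.mp hT, card_empty] at hc
    omega
  have hbdd : BddAbove {m | ∃ S : Finset V, IsKFree G s S ∧ S.card = m} :=
    ⟨Fintype.card V, by rintro m ⟨S, -, rfl⟩; exact S.card_le_univ.trans_eq card_univ⟩
  have := Nat.sSup_mem hne hbdd
  obtain ⟨S, hfree, hcard⟩ := this
  exact ⟨S, hfree, hcard⟩

lemma card_layer (n k : ℕ) :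
    (univ.filter fun w : Fin n → Bool => wt w = k).card = n.choose k := by
  classical
  have : (univ.filter fun w : Fin n → Bool => wt w = k).card
      = (Finset.powersetCard k (univ : Finset (Fin n))).card := by
    apply Finset.card_bij (fun w _ => univ.filter fun i => w i = true)
    · intro w hw
      simp only [mem_filter, mem_univ, true_and] at hw
      rw [Finset.mem_powersetCard]
      exact ⟨Finset.subset_univ _, hw⟩
    · intro a ha b hb h
      funext i
      have := Finset.ext_iff.mp h i
      simp only [mem_filter, mem_univ, true_and] at this
      cases hai : a i <;> cases hbi : b i <;> simp_all
    · intro t ht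
      rw [Finset.mem_powersetCard] at ht
      refine ⟨fun i => decide (i ∈ t), ?_, ?_⟩
      · rw [mem_filter]
        refine ⟨mem_univ _, ?_⟩
        simp only [wt]
        rw [← ht.2]
        congr 1
        ext i; simp
      · ext i; simp
  rw [this, Finset.card_powersetCard, card_univ, Fintype.card_fin]

lemma card_filter_tXor {n k : ℕ} (y : Fin n → Bool) :
    (univ.filter fun z : Fin n → Bool => wt (tXor z y) = k).card = n.choose k := by
  classical
  rw [← card_layer n k]
  apply Finset.card_bij (fun z _ => tXor z y)
  · intro z hz
    simp only [mem_filter, mem_univ, true_and] at hz ⊢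
    exact hz
  · intro a ha b hb h
    have : tXor (tXor a y) y = tXor (tXor b y) y := by rw [h]
    funext i
    have hi := congrFun h i
    simp only [tXor] at hi
    cases hy : y i <;> cases hai : a i <;> cases hbi : b i <;> simp_all
  · intro w hw
    simp only [mem_filter, mem_univ, true_and] at hw
    refine ⟨tXor w y, ?_, ?_⟩
    · simp only [mem_filter, mem_univ, true_and]
      have : tXor (tXor w y) y = w := by
        funext i; simp only [tXor]; cases w i <;> cases y i <;> rfl
      rw [this]; exact hw
    · funext i; simp only [tXor]; cases w i <;> cases y i <;> rfl

/-- **Transfer lemma.** For all `n ≥ 1`, `t ≥ 1`, `s ≥ 2` and `0 ≤ k ≤ n`,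
`C(n,k) · α_s(H_{2t}(n)) ≤ 2^n · α_s(L_k)`. -/
theorem stmt7 (n t s k : ℕ) (hn : 1 ≤ n) (ht : 1 ≤ t) (hs : 2 ≤ s) (hk : k ≤ n) :
    Nat.choose n k * alphaS (cubeGraph n (2 * t)) s ≤
      2 ^ n * alphaS (layerGraph n (2 * t) k) s := by
  classical
  obtain ⟨S, hSfree, hScard⟩ := exists_alphaS_max (cubeGraph n (2 * t)) s (by omega)
  rw [← hScard]
  set α := alphaS (layerGraph n (2 * t) k) s with hα
  have key : ∀ z : Fin n → Bool,
      (S.filter fun y => wt (tXor z y) = k).card ≤ α := by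
    intro z
    set B : Finset {x : Fin n → Bool // wt x = k} :=
      univ.filter fun v => tXor z v.val ∈ S with hB
    have hcard : (S.filter fun y => wt (tXor z y) = k).card = B.card := by
      apply Finset.card_bij
        (fun y hy => (⟨tXor z y, (Finset.mem_filter.mp hy).2⟩ : {x : Fin n → Bool // wt x = k}))
      · intro y hy
        simp only [hB, mem_filter, mem_univ, true_and]
        rw [tXor_invol]
        exact (Finset.mem_filter.mp hy).1
      · intro a ha b hb h
        exact tXor_inj z (congrArg Subtype.val h)
      · intro v hv
        simp only [hB, mem_filter, mem_univ, true_and] at hv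
        refine ⟨tXor z v.val, ?_, ?_⟩
        · rw [Finset.mem_filter]
          refine ⟨hv, ?_⟩
          rw [tXor_invol]
          exact v.2
        · apply Subtype.ext
          simp only
          rw [tXor_invol]
    have hfree : IsKFree (layerGraph n (2 * t) k) s B := by
      rintro ⟨T, hTsub, hTcard, hTadj⟩
      apply hSfree
      refine ⟨T.image (fun v => tXor z v.val), ?_, ?_, ?_⟩
      · intro x hx
        obtain ⟨v, hv, rfl⟩ := Finset.mem_image.mp hx
        have := hTsub hv
        simp only [hB, mem_filter, mem_univ, true_and] at this
        exact this
      · rw [Finset.card_image_of_injective _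
          (fun a b hab => Subtype.ext (tXor_inj z hab)), hTcard]
      · intro x hx y hy hxy
        obtain ⟨a, ha, rfl⟩ := Finset.mem_image.mp hx
        obtain ⟨b, hb, rfl⟩ := Finset.mem_image.mp hy
        have hab : a ≠ b := fun e => hxy (by rw [e])
        have hadj := hTadj a ha b hb hab
        exact (adj_tXor z a.val b.val).mpr hadj
    rw [hcard]
    exact le_alphaS _ _ _ hfree
  have count : Nat.choose n k * S.card
      = ∑ z : Fin n → Bool, (S.filter fun y => wt (tXor z y) = k).card := by
    have swap : ∑ y ∈ S, (univ.filter fun z : Fin n → Bool => wt (tXor z y) = k).card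
        = ∑ z : Fin n → Bool, (S.filter fun y => wt (tXor z y) = k).card := by
      simp_rw [Finset.card_filter]
      exact Finset.sum_comm
    rw [← swap]
    simp_rw [card_filter_tXor]
    rw [Finset.sum_const, smul_eq_mul, mul_comm]
  rw [count]
  calc ∑ z : Fin n → Bool, (S.filter fun y => wt (tXor z y) = k).card
      ≤ ∑ _z : Fin n → Bool, α := Finset.sum_le_sum fun z _ => key z
    _ = 2 ^ n * α := by
        rw [Finset.sum_const, smul_eq_mul, card_univ]
        simp
end

section
/- For all integers n ≥ 1 and t ≥ 1, the chromatic number of H_{2t}(n) satisfies χ(H_{2t}(n)) ≤ (t + 1) · max_{0 ≤ k ≤ n} χ(L_k), where L_k is the subgraph of H_{2t}(n) induced on the k-th layer. -/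
open Finset

lemma wt_le {n : ℕ} (x : Fin n → Bool) : wt x ≤ n :=
  (card_filter_le _ _).trans (by simp)

lemma key {n : ℕ} (x y : Fin n → Bool) :
    ∃ p q r : ℕ, hammingDist x y = p + q ∧ wt x = r + p ∧ wt y = r + q := by
  classical
  refine ⟨(univ.filter fun i => x i = true ∧ y i = false).card,
    (univ.filter fun i => x i = false ∧ y i = true).card,
    (univ.filter fun i => x i = true ∧ y i = true).card, ?_, ?_, ?_⟩
  · rw [hammingDist, ← card_union_of_disjoint (by
      rw [Finset.disjoint_left]; intro a ha hb; simp at ha hb; simp [ha.1] at hb)]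
    congr 1
    ext i
    cases hx : x i <;> cases hy : y i <;> simp [hx, hy]
  · rw [wt, ← card_union_of_disjoint (by
      rw [Finset.disjoint_left]; intro a ha hb; simp at ha hb; simp [ha.2] at hb)]
    congr 1
    ext i
    cases hx : x i <;> cases hy : y i <;> simp [hx, hy]
  · rw [wt, ← card_union_of_disjoint (by
      rw [Finset.disjoint_left]; intro a ha hb; simp at ha hb; simp [ha.1] at hb)]
    congr 1
    ext i
    cases hx : x i <;> cases hy : y i <;> simp [hx, hy]

lemma modneq (t a j : ℕ) (h1 : 1 ≤ j) (h2 : j ≤ t) :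
    (a / 2) % (t + 1) ≠ ((a + 2 * j) / 2) % (t + 1) := by
  have hdiv : (a + 2 * j) / 2 = a / 2 + j := by omega
  rw [hdiv]
  intro h
  have hd : (t + 1) ∣ (a / 2 + j) - a / 2 :=
    (Nat.modEq_iff_dvd' (Nat.le_add_right _ _)).mp h
  simp only [Nat.add_sub_cancel_left] at hd
  have := Nat.le_of_dvd (by omega) hd
  omega


/-- **Lemma.** For all `n ≥ 1` and `t ≥ 1`,
`χ(H_{2t}(n)) ≤ (t + 1) · max_{0 ≤ k ≤ n} χ(L_k)`. -/
theorem stmt11 (n t : ℕ) (hn : 1 ≤ n) (ht : 1 ≤ t) :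
    (cubeGraph n (2 * t)).chromaticNumber ≤
      ((t : ℕ∞) + 1) *
        (Finset.range (n + 1)).sup (fun k => (layerGraph n (2 * t) k).chromaticNumber) := by
  classical
  set M := (Finset.range (n + 1)).sup (fun k => (layerGraph n (2 * t) k).chromaticNumber) with hM
  rcases eq_or_ne M ⊤ with hT | hT
  · rw [hT, ENat.mul_top (by simp)]
    exact le_top
  · obtain ⟨m, hm⟩ := WithTop.ne_top_iff_exists.mp hT
    have hcol : ∀ k, (layerGraph n (2 * t) k).Colorable m := by
      intro k
      by_cases hk : k ≤ n
      · rw [← SimpleGraph.chromaticNumber_le_iff_colorable]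
        refine le_trans (le_sup (f := fun k => (layerGraph n (2 * t) k).chromaticNumber)
          (mem_range.2 (Nat.lt_succ_of_le hk))) (le_of_eq ?_)
        rw [← hM, ← hm]
        norm_cast
      · have : IsEmpty {x : Fin n → Bool // wt x = k} :=
          ⟨fun x => hk (x.2 ▸ wt_le x.1)⟩
        exact ⟨SimpleGraph.Coloring.mk (fun v => isEmptyElim v)
          (fun {a b} _ => isEmptyElim a)⟩
    have C : ∀ k, (layerGraph n (2 * t) k).Coloring (Fin m) := fun k => (hcol k).some
    -- cast helper
    have gcast : ∀ (x : Fin n → Bool) (k : ℕ) (hx : wt x = k),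
        C (wt x) ⟨x, rfl⟩ = C k ⟨x, hx⟩ := by
      intro x k hx; subst hx; rfl
    have hval : ∀ {x y : Fin n → Bool}, (cubeGraph n (2 * t)).Adj x y →
        ((⟨(wt x / 2) % (t + 1), Nat.mod_lt _ t.succ_pos⟩ : Fin (t + 1)),
          C (wt x) ⟨x, rfl⟩) ≠
        ((⟨(wt y / 2) % (t + 1), Nat.mod_lt _ t.succ_pos⟩ : Fin (t + 1)),
          C (wt y) ⟨y, rfl⟩) := by
      intro x y hadj heq
      obtain ⟨hne, hd⟩ := hadj
      obtain ⟨p, q, r, h1, h2, h3⟩ := key x y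
      have heq1 : (wt x / 2) % (t + 1) = (wt y / 2) % (t + 1) := by
        have := congrArg Prod.fst heq
        simpa [Fin.ext_iff] using this
      have heq2 : C (wt x) ⟨x, rfl⟩ = C (wt y) ⟨y, rfl⟩ := congrArg Prod.snd heq
      rcases Nat.lt_trichotomy (wt x) (wt y) with hlt | heqw | hgt
      · -- p < q, wt y = wt x + 2*(t - p)
        have hj : wt y = wt x + 2 * (t - p) ∧ 1 ≤ t - p ∧ t - p ≤ t := by omega
        exact modneq t (wt x) (t - p) hj.2.1 hj.2.2 (hj.1 ▸ heq1)
      · -- same layer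
        rw [gcast x (wt y) heqw] at heq2
        have hadj' : (layerGraph n (2 * t) (wt y)).Adj ⟨x, heqw⟩ ⟨y, rfl⟩ := ⟨hne, hd⟩
        exact (C (wt y)).valid hadj' heq2
      · have hj : wt x = wt y + 2 * (t - q) ∧ 1 ≤ t - q ∧ t - q ≤ t := by omega
        exact modneq t (wt y) (t - q) hj.2.1 hj.2.2 (hj.1 ▸ heq1.symm)
    have col : (cubeGraph n (2 * t)).Coloring (Fin (t + 1) × Fin m) :=
      SimpleGraph.Coloring.mk
        (fun x => (⟨(wt x / 2) % (t + 1), Nat.mod_lt _ t.succ_pos⟩, C (wt x) ⟨x, rfl⟩))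
        (fun h => hval h)
    have hcard : (cubeGraph n (2 * t)).Colorable ((t + 1) * m) := by
      have := col.colorable
      simpa [Fintype.card_prod] using this
    have hm' : M = ((m : ℕ) : ℕ∞) := by rw [← hm]; norm_cast
    rw [hm']
    calc (cubeGraph n (2 * t)).chromaticNumber ≤ (((t + 1) * m : ℕ) : ℕ∞) :=
          SimpleGraph.chromaticNumber_le_iff_colorable.mpr hcard
      _ = ((t : ℕ∞) + 1) * (m : ℕ∞) := by push_cast; ring
end

section
/- Boosting lemma: let n ≥ 1, let D ⊆ {1, …, n}, and let G be the graph on vertex set {0,1}^n in which x and y are adjacent if and only if their Hamming distance lies in D. Let I be an independent set in G and let s ≥ 3 be an integer. Then α_s(G) ≥ (s − 1) · |I| · (1 − ((s − 2)/2) · |I| / 2^n), as an inequality of real numbers. -/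
open Finset

namespace BoostAux
variable {n : ℕ}

def xf (v x : Fin n → Bool) : Fin n → Bool := fun i => xor (v i) (x i)

lemma xf_xf (v x : Fin n → Bool) : xf v (xf v x) = x := by
  funext i; cases h : v i <;> simp [xf, h]

lemma xf_inj (v : Fin n → Bool) : Function.Injective (xf v) := by
  intro a b h
  rw [← xf_xf v a, h, xf_xf]

lemma xf_comm (v x : Fin n → Bool) : xf v x = xf x v := by
  funext i; simp [xf, Bool.xor_comm]

lemma hamming_xf (v x y : Fin n → Bool) :
    hammingDist (xf v x) (xf v y) = hammingDist x y := by
  simp only [hammingDist]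
  congr 1
  ext i
  cases h : v i <;> simp [xf, h]

lemma mem_image_xf {I : Finset (Fin n → Bool)} {v u : Fin n → Bool} :
    u ∈ I.image (xf v) ↔ xf v u ∈ I := by
  simp only [mem_image]
  constructor
  · rintro ⟨x, hx, rfl⟩; rwa [xf_xf]
  · intro h; exact ⟨xf v u, h, xf_xf v u⟩

lemma count (I S : Finset (Fin n → Bool)) :
    ∑ v : Fin n → Bool, ((I.image (xf v)) ∩ S).card = I.card * S.card := by
  have h1 : ∀ v, ((I.image (xf v)) ∩ S).card = ∑ u ∈ S, if u ∈ I.image (xf v) then 1 else 0 := by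
    intro v
    rw [inter_comm, ← filter_mem_eq_inter, card_filter]
  simp only [h1]
  rw [Finset.sum_comm]
  have h2 : ∀ u ∈ S, (∑ v : Fin n → Bool, if u ∈ I.image (xf v) then 1 else 0) = I.card := by
    intro u _
    rw [← card_filter]
    have : univ.filter (fun v => u ∈ I.image (xf v)) = I.image (xf u) := by
      ext v
      simp only [mem_filter, mem_univ, true_and, mem_image_xf]
      rw [xf_comm]
    rw [this, card_image_of_injective _ (xf_inj u)]
  rw [Finset.sum_congr rfl h2, Finset.sum_const, smul_eq_mul, mul_comm]

lemma card_cube : Fintype.card (Fin n → Bool) = 2 ^ n := by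
  simp [Fintype.card_fun]

lemma avg (I S : Finset (Fin n → Bool)) :
    ∃ v : Fin n → Bool,
      (((I.image (xf v)) ∩ S).card : ℝ) ≤ (I.card : ℝ) * S.card / 2 ^ n := by
  by_contra h
  push_neg at h
  have hne : (univ : Finset (Fin n → Bool)).Nonempty := univ_nonempty
  have hlt := Finset.sum_lt_sum_of_nonempty hne (fun v _ => h v)
  have hsum : ∑ v : Fin n → Bool, (((I.image (xf v)) ∩ S).card : ℝ)
      = (I.card : ℝ) * S.card := by
    rw [← Nat.cast_sum]
    exact_mod_cast congrArg (Nat.cast (R := ℝ)) (count I S)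
  rw [Finset.sum_const, hsum, card_univ, card_cube, nsmul_eq_mul] at hlt
  have h2 : (0:ℝ) < 2 ^ n := by positivity
  field_simp at hlt
  push_cast at hlt
  linarith

lemma boost (I : Finset (Fin n → Bool)) (j : ℕ) :
    ∃ V S : Finset (Fin n → Bool), V.card ≤ j ∧
      S = V.biUnion (fun v => I.image (xf v)) ∧
      (j : ℝ) * I.card - ((j : ℝ) * ((j : ℝ) - 1) / 2) * (I.card : ℝ) ^ 2 / 2 ^ n
        ≤ (S.card : ℝ) := by
  induction j with
  | zero => exact ⟨∅, ∅, le_refl 0, by simp, by norm_num⟩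
  | succ j ih =>
    obtain ⟨V, S, hV, hSeq, hS⟩ := ih
    obtain ⟨v, hv⟩ := avg I S
    refine ⟨insert v V, S ∪ I.image (xf v), ?_, ?_, ?_⟩
    · exact (card_insert_le _ _).trans (by omega)
    · rw [biUnion_insert, hSeq, union_comm]
    · have hSle : (S.card : ℝ) ≤ (j : ℝ) * I.card := by
        have h1 : S.card ≤ ∑ w ∈ V, (I.image (xf w)).card := hSeq ▸ card_biUnion_le
        have h2 : ∑ w ∈ V, (I.image (xf w)).card ≤ V.card * I.card := by
          rw [← smul_eq_mul, ← Finset.sum_const]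
          exact Finset.sum_le_sum fun w _ => card_image_le
        have : (S.card : ℝ) ≤ (V.card : ℝ) * I.card := by exact_mod_cast h1.trans h2
        refine this.trans ?_
        have : (V.card : ℝ) ≤ (j : ℝ) := by exact_mod_cast hV
        exact mul_le_mul_of_nonneg_right this (by positivity)
      have hcard : ((S ∪ I.image (xf v)).card : ℝ)
          = (S.card : ℝ) + I.card - ((I.image (xf v)) ∩ S).card := by
        have := Finset.card_union_add_card_inter S (I.image (xf v))
        have himg : (I.image (xf v)).card = I.card := card_image_of_injective _ (xf_inj v)
        rw [himg] at this
        rw [inter_comm]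
        have := congrArg (Nat.cast (R := ℝ)) this
        push_cast at this ⊢
        linarith
      have h2 : (0:ℝ) < 2 ^ n := by positivity
      have hX : (((I.image (xf v)) ∩ S).card : ℝ) ≤ (j : ℝ) * (I.card : ℝ) ^ 2 / 2 ^ n := by
        refine hv.trans ?_
        rw [div_le_div_iff_of_pos_right h2]
        have hInn : (0:ℝ) ≤ (I.card : ℝ) := by positivity
        nlinarith
      have hc : ((j:ℝ)+1) * (((j:ℝ)+1) - 1) / 2 = (j:ℝ) * ((j:ℝ) - 1) / 2 + j := by ring
      rw [hcard]
      push_cast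
      have key : ((j:ℝ)+1) * (((j:ℝ)+1) - 1) / 2 * (I.card:ℝ) ^ 2 / 2 ^ n
          = (j:ℝ) * ((j:ℝ) - 1) / 2 * (I.card:ℝ) ^ 2 / 2 ^ n + (j:ℝ) * (I.card:ℝ) ^ 2 / 2 ^ n := by
        ring
      linarith [hS, hX, key]

end BoostAux

open BoostAux in
theorem stmt12' (n : ℕ) (hn : 1 ≤ n) (D : Set ℕ) (hD : D ⊆ Set.Icc 1 n)
    (G : SimpleGraph (Fin n → Bool))
    (hG : ∀ x y : Fin n → Bool, G.Adj x y ↔ hammingDist x y ∈ D)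
    (I : Finset (Fin n → Bool))
    (hI : ∀ x ∈ I, ∀ y ∈ I, ¬ G.Adj x y)
    (s : ℕ) (hs : 3 ≤ s)
    (alphaS' : ℕ)
    (halpha : ∀ S : Finset (Fin n → Bool),
      (¬ ∃ T : Finset (Fin n → Bool), T ⊆ S ∧ T.card = s ∧
        ∀ x ∈ T, ∀ y ∈ T, x ≠ y → G.Adj x y) → S.card ≤ alphaS') :
    ((s : ℝ) - 1) * I.card * (1 - ((s : ℝ) - 2) / 2 * I.card / 2 ^ n) ≤
      (alphaS' : ℝ) := by
  classical
  obtain ⟨V, S, hV, hSeq, hS⟩ := boost I (s - 1)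
  -- S is K_s-free
  have hfree : ¬ ∃ T : Finset (Fin n → Bool), T ⊆ S ∧ T.card = s ∧
      ∀ x ∈ T, ∀ y ∈ T, x ≠ y → G.Adj x y := by
    rintro ⟨T, hTS, hTcard, hadj⟩
    set g : (Fin n → Bool) → (Fin n → Bool) := fun t =>
      if h : ∃ v ∈ V, t ∈ I.image (xf v) then h.choose else (fun _ => false) with hg
    have hmaps : ∀ t ∈ T, g t ∈ V ∧ t ∈ I.image (xf (g t)) := by
      intro t ht
      have : t ∈ V.biUnion (fun v => I.image (xf v)) := hSeq ▸ hTS ht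
      rw [mem_biUnion] at this
      have hex : ∃ v ∈ V, t ∈ I.image (xf v) := this
      rw [hg]
      simp only [dif_pos hex]
      exact ⟨hex.choose_spec.1, hex.choose_spec.2⟩
    have hlt : V.card < T.card := by
      rw [hTcard]; omega
    obtain ⟨t1, ht1, t2, ht2, hne, heq⟩ :=
      Finset.exists_ne_map_eq_of_card_lt_of_maps_to hlt (fun t ht => (hmaps t ht).1)
    obtain ⟨x1, hx1, hx1e⟩ := mem_image.mp (hmaps t1 ht1).2
    obtain ⟨x2, hx2, hx2e⟩ := mem_image.mp (hmaps t2 ht2).2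
    rw [heq] at hx1e
    have hdist : hammingDist t1 t2 = hammingDist x1 x2 := by
      rw [← hamming_xf (g t2) x1 x2, hx1e, hx2e]
    have hadj12 := hadj t1 ht1 t2 ht2 hne
    rw [hG, hdist] at hadj12
    exact hI x1 hx1 x2 hx2 ((hG x1 x2).mpr hadj12)
  have hle : (S.card : ℝ) ≤ (alphaS' : ℝ) := by exact_mod_cast halpha S hfree
  have hj : ((s - 1 : ℕ) : ℝ) = (s : ℝ) - 1 := by
    have h1 : (1:ℕ) ≤ s := by omega
    push_cast [h1]
    ring
  rw [hj] at hS
  have hring : ((s:ℝ) - 1) * I.card * (1 - ((s:ℝ) - 2) / 2 * I.card / 2 ^ n)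
      = ((s:ℝ) - 1) * I.card
        - ((s:ℝ) - 1) * (((s:ℝ) - 1) - 1) / 2 * (I.card : ℝ) ^ 2 / 2 ^ n := by
    ring
  rw [hring]
  linarith [hS, hle]

/-- **Boosting lemma.** Let `G` be a graph on `{0,1}^n` whose adjacency depends
only on the Hamming distance, via a set `D ⊆ {1, …, n}` of allowed distances.
If `I` is an independent set in `G` and `s ≥ 3`, then
`α_s(G) ≥ (s − 1) · |I| · (1 − ((s − 2)/2) · |I| / 2^n)`. -/
theorem stmt12 (n : ℕ) (hn : 1 ≤ n) (D : Set ℕ) (hD : D ⊆ Set.Icc 1 n)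
    (G : SimpleGraph (Fin n → Bool))
    (hG : ∀ x y : Fin n → Bool, G.Adj x y ↔ hammingDist x y ∈ D)
    (I : Finset (Fin n → Bool)) (hI : ∀ x ∈ I, ∀ y ∈ I, ¬ G.Adj x y)
    (s : ℕ) (hs : 3 ≤ s) :
    ((s : ℝ) - 1) * I.card * (1 - ((s : ℝ) - 2) / 2 * I.card / 2 ^ n) ≤
      (alphaS G s : ℝ) := by
  classical
  refine stmt12' n hn D hD G hG I hI s hs (alphaS G s) ?_
  intro S hfr
  have hbdd : BddAbove {m | ∃ S : Finset (Fin n → Bool), IsKFree G s S ∧ S.card = m} := by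
    refine ⟨Fintype.card (Fin n → Bool), ?_⟩
    rintro m ⟨S, -, rfl⟩
    exact S.card_le_univ
  exact le_csSup hbdd ⟨S, hfr, rfl⟩
end

section
/- Let t ≥ 1 and m ≥ 1 be integers and suppose n = 2^m or n = 2^m − 1 (with n ≥ 1). Then there exists a partition of {0,1}^n into at most 2^{t·m} parts such that every part is an independent set of H_{2t}(n) and all parts have the same cardinality. -/
open Finset

lemma vand_aux {F : Type*} [Field F] {s : ℕ} (hs : 0 < s) (a : Fin s → F)
    (ha : Function.Injective a) (h0 : ∀ k, a k ≠ 0)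
    (hp : ∀ j, 1 ≤ j → j ≤ s → ∑ k, a k ^ j = 0) : False := by
  classical
  set M : Matrix (Fin s) (Fin s) F := Matrix.of fun j k => a k ^ ((j : ℕ) + 1) with hM
  have hT : M.transpose = Matrix.diagonal a * Matrix.vandermonde a := by
    ext k j
    simp [hM, Matrix.transpose_apply, Matrix.diagonal_mul, Matrix.vandermonde, pow_succ']
  have hdet : M.det ≠ 0 := by
    rw [← Matrix.det_transpose, hT, Matrix.det_mul, Matrix.det_diagonal]
    refine mul_ne_zero (Finset.prod_ne_zero_iff.2 fun k _ => h0 k) ?_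
    rw [Matrix.det_vandermonde_ne_zero_iff]
    exact ha
  have h1 : M.mulVec (fun _ => (1 : F)) = 0 := by
    funext j
    simpa [hM, Matrix.mulVec, dotProduct] using
      hp ((j : ℕ) + 1) (Nat.succ_le_succ (Nat.zero_le _)) (Nat.succ_le_of_lt j.isLt)
  have := Matrix.eq_zero_of_mulVec_eq_zero hdet h1
  exact one_ne_zero (congrFun this ⟨0, hs⟩)

lemma finset_vand {F : Type*} [Field F] (A : Finset F) (h0 : (0 : F) ∉ A)
    (hA : A.Nonempty) (hp : ∀ j, 1 ≤ j → j ≤ A.card → ∑ x ∈ A, x ^ j = 0) : False := by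
  classical
  refine vand_aux (s := A.card) (Finset.card_pos.2 hA)
    (fun k => (A.equivFin.symm k : F)) ?_ ?_ ?_
  · exact fun k l h => A.equivFin.symm.injective (Subtype.ext h)
  · intro k h
    exact h0 (h ▸ (A.equivFin.symm k).2)
  · intro j hj1 hj2
    have : ∑ k : Fin A.card, ((A.equivFin.symm k : F)) ^ j = ∑ x ∈ A, x ^ j := by
      rw [← Finset.sum_attach A (fun x => x ^ j)]
      exact Fintype.sum_equiv A.equivFin.symm _ _ (fun k => rfl)
    rw [this]
    exact hp j hj1 hj2

/-- **Proposition.** If `n = 2^m` or `n = 2^m − 1` (with `n ≥ 1`), then `{0,1}^n`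
can be partitioned into at most `2^{t·m}` parts, each an independent set of
`H_{2t}(n)`, all of the same cardinality. -/
theorem stmt14 (n t m : ℕ) (hn : 1 ≤ n) (ht : 1 ≤ t) (hm : 1 ≤ m)
    (hnm : n = 2 ^ m ∨ n = 2 ^ m - 1) :
    ∃ P : Finpartition (Finset.univ : Finset (Fin n → Bool)),
      P.parts.card ≤ 2 ^ (t * m) ∧
      (∀ p ∈ P.parts, ∀ x ∈ p, ∀ y ∈ p, ¬ (cubeGraph n (2 * t)).Adj x y) ∧
      (∀ p ∈ P.parts, ∀ q ∈ P.parts, p.card = q.card) := by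
  classical
  set F := GaloisField 2 m with hF
  letI : Fintype F := Fintype.ofFinite F
  have hcard : Fintype.card F = 2 ^ m := by
    have := GaloisField.card 2 m (by omega)
    rwa [Nat.card_eq_fintype_card] at this
  have hnF : Fintype.card (Fin n) ≤ Fintype.card F := by
    rw [hcard, Fintype.card_fin]
    rcases hnm with h | h <;> omega
  obtain ⟨e⟩ : Nonempty (Fin n ↪ F) := Function.Embedding.nonempty_of_card_le hnF
  set φ : (Fin n → Bool) → (Fin t → F) :=
    fun x j => ∑ i, (if x i then (e i) ^ (2 * (j : ℕ) + 1) else 0) with hφ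
  -- odd power sums over the symmetric difference vanish
  have key : ∀ x y : Fin n → Bool, φ x = φ y → ∀ l : ℕ, l < t →
      ∑ i ∈ univ.filter (fun i => x i ≠ y i), (e i) ^ (2 * l + 1) = 0 := by
    intro x y hxy l hl
    have h1 := congrFun hxy ⟨l, hl⟩
    simp only [hφ] at h1
    have h2 : ∑ i ∈ univ.filter (fun i => x i ≠ y i), (e i) ^ (2 * l + 1)
        = ∑ i, ((if x i then (e i) ^ (2 * l + 1) else 0)
            + (if y i then (e i) ^ (2 * l + 1) else 0)) := by
      rw [Finset.sum_filter]
      refine Finset.sum_congr rfl fun i _ => ?_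
      cases hx : x i <;> cases hy : y i <;> simp [CharTwo.add_self_eq_zero]
    rw [h2, Finset.sum_add_distrib, h1, CharTwo.add_self_eq_zero]
  -- independence within a fiber of φ
  have indep : ∀ x y : Fin n → Bool, φ x = φ y → ¬ (cubeGraph n (2 * t)).Adj x y := by
    rintro x y hxy ⟨hne, hdist⟩
    set S : Finset (Fin n) := univ.filter (fun i => x i ≠ y i) with hS
    have hScard : S.card = 2 * t := by simpa [hammingDist, hS] using hdist
    set B : Finset F := S.image e with hB
    have hBcard : B.card = 2 * t := by
      rw [hB, Finset.card_image_of_injective _ e.injective, hScard]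
    set A : Finset F := B.erase 0 with hA
    have hA0 : (0 : F) ∉ A := Finset.notMem_erase _ _
    have hAcard_le : A.card ≤ 2 * t := le_trans (Finset.card_erase_le) hBcard.le
    have hAcard_ge : 2 * t - 1 ≤ A.card := by
      have h := Finset.pred_card_le_card_erase (s := B) (a := (0 : F))
      rw [← hA] at h
      omega
    have hpow : ∀ j, 1 ≤ j → j ≤ 2 * t → ∑ i ∈ S, (e i) ^ j = 0 := by
      intro j
      induction j using Nat.strong_induction_on with
      | _ j ih =>
        intro hj1 hj2
        rcases Nat.even_or_odd j with ⟨l, hl⟩ | ⟨l, hl⟩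
        · have heq : ∑ i ∈ S, (e i) ^ j = (∑ i ∈ S, (e i) ^ l) ^ 2 := by
            rw [CharTwo.sum_sq]
            refine Finset.sum_congr rfl fun i _ => ?_
            rw [← pow_mul]
            congr 1
            omega
          rw [heq, ih l (by omega) (by omega) (by omega)]
          exact zero_pow two_ne_zero
        · subst hl
          exact key x y hxy l (by omega)
    have hpowA : ∀ j, 1 ≤ j → j ≤ A.card → ∑ a ∈ A, a ^ j = 0 := by
      intro j hj1 hj2
      have e1 : ∑ a ∈ A, a ^ j = ∑ a ∈ B, a ^ j := by
        by_cases h0 : (0 : F) ∈ B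
        · rw [hA, ← Finset.add_sum_erase B _ h0, zero_pow (by omega), zero_add]
        · rw [hA, Finset.erase_eq_of_notMem h0]
      rw [e1, hB, Finset.sum_image (fun a _ b _ h => e.injective h)]
      exact hpow j hj1 (le_trans hj2 hAcard_le)
    exact finset_vand A hA0 (Finset.card_pos.mp (by omega)) hpowA
  -- additivity of φ with respect to xor
  have hadd : ∀ z w : Fin n → Bool,
      φ (fun i => xor (z i) (w i)) = fun j => φ z j + φ w j := by
    intro z w
    funext j
    simp only [hφ]
    rw [← Finset.sum_add_distrib]
    refine Finset.sum_congr rfl fun i _ => ?_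
    rcases Bool.dichotomy (z i) with hz | hz <;> rcases Bool.dichotomy (w i) with hw | hw <;>
      simp [hz, hw, CharTwo.add_self_eq_zero]
  set P := Finpartition.ofSetoid (Setoid.ker φ) with hP
  have hrepr : ∀ p ∈ P.parts, ∃ a : Fin n → Bool, ∀ b, b ∈ p ↔ φ a = φ b := by
    intro p hp
    rw [hP] at hp
    obtain ⟨a, -, rfl⟩ := Finset.mem_image.1 hp
    exact ⟨a, fun b => by simp [Setoid.ker, Function.onFun]⟩
  refine ⟨P, ?_, ?_, ?_⟩
  · have hsurj : Set.SurjOn (fun c => univ.filter (fun b => φ b = c))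
        ((univ : Finset (Fin t → F)) : Set (Fin t → F)) (P.parts : Set (Finset (Fin n → Bool))) := by
      intro p hp
      obtain ⟨a, ha⟩ := hrepr p hp
      refine ⟨φ a, by simp, ?_⟩
      ext b
      simp only [Finset.mem_filter, Finset.mem_univ, true_and]
      rw [ha b, eq_comm]
    calc P.parts.card ≤ (univ : Finset (Fin t → F)).card :=
          Finset.card_le_card_of_surjOn _ hsurj
      _ = 2 ^ (t * m) := by
          rw [Finset.card_univ, Fintype.card_fun, hcard, Fintype.card_fin, ← pow_mul,
            mul_comm m t]
  · intro p hp x hx y hy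
    obtain ⟨a, ha⟩ := hrepr p hp
    exact indep x y (((ha x).1 hx).symm.trans ((ha y).1 hy))
  · intro p hp q hq
    obtain ⟨a, ha⟩ := hrepr p hp
    obtain ⟨b, hb⟩ := hrepr q hq
    have hψ : ∀ (u v : Fin n → Bool) (z : Fin n → Bool), φ z = φ u →
        φ v = φ (fun i => xor (z i) (xor (u i) (v i))) := by
      intro u v z hz
      rw [hadd z (fun i => xor (u i) (v i))]
      funext j
      rw [congrFun (hadd u v) j, hz]
      simp only [← add_assoc, CharTwo.add_self_eq_zero, zero_add]
    refine Finset.card_bij' (fun z _ => fun i => xor (z i) (xor (a i) (b i)))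
      (fun z _ => fun i => xor (z i) (xor (a i) (b i))) ?_ ?_ ?_ ?_
    · intro z hz
      exact (hb _).2 (hψ a b z (((ha z).1 hz).symm))
    · intro z hz
      have h2 := hψ b a z (((hb z).1 hz).symm)
      refine (ha _).2 ?_
      show φ a = φ (fun i => xor (z i) (xor (a i) (b i)))
      have h3 : (fun i => xor (z i) (xor (a i) (b i)))
          = (fun i => xor (z i) (xor (b i) (a i))) := by
        funext i
        rw [Bool.xor_comm (a i) (b i)]
      rw [h3]
      exact h2
    · intro z hz
      funext i
      rcases Bool.dichotomy (a i) with h | h <;> rcases Bool.dichotomy (b i) with h' | h' <;>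
        simp [h, h']
    · intro z hz
      funext i
      rcases Bool.dichotomy (a i) with h | h <;> rcases Bool.dichotomy (b i) with h' | h' <;>
        simp [h, h']
end
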